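/- Let (ε, W) be a Weyl candidate in dimension 6. Then for all a, b, e, f, g, c, d, h, i, j in Fin 6, writing x = ![a, b, e, f, g] and y = ![c, d, h, i, j] : Fin 5 → Fin 6: ∑_{σ, τ ∈ Equiv.Perm (Fin 5)} (sign σ) * (sign τ) * W (x (σ 0)) (x (σ 1)) (y (τ 0)) (y (τ 1)) * δ (x (σ 2)) (y (τ 2)) * δ (x (σ 3)) (y (τ 3)) * δ (x (σ 4)) (y (τ 4)) = 0. (This is the six-dimensional dimensionally dependent identity C^{[ab}_{[cd} δ^{efg]}_{hij]} = 0.) -/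

import Mathlib

noncomputable section

open Finset Equiv

/-- A Weyl candidate in dimension `n`: diagonal metric signs `ε` and mixed components
`W a b c d = C^{ab}{}_{cd}` satisfying antisymmetry in each pair, trace-freeness,
pair-interchange symmetry and the first Bianchi identity (with indices moved by `ε`). -/
def IsWeylCandidate {n : ℕ} (ε : Fin n → ℝ) (W : Fin n → Fin n → Fin n → Fin n → ℝ) : Prop :=
  (∀ i, ε i = 1 ∨ ε i = -1) ∧
  (∀ a b c d, W a b c d = -(W b a c d)) ∧
  (∀ a b c d, W a b c d = -(W a b d c)) ∧
  (∀ a c, ∑ i, W a i c i = 0) ∧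
  (∀ a b c d, ε a * ε b * W a b c d = ε c * ε d * W c d a b) ∧
  (∀ a b c d, ε b * W a b c d + ε c * W a c d b + ε d * W a d b c = 0)

namespace Dim6Aux


/-- Kronecker delta on `Fin 6`, as a real number. -/
def kd (u v : Fin 6) : ℝ := if u = v then 1 else 0

@[simp] lemma kd_self (u : Fin 6) : kd u u = 1 := by simp [kd]

lemma kd_eq_zero {u v : Fin 6} (h : u ≠ v) : kd u v = 0 := by simp [kd, h]

@[simp] lemma val_five : ((5 : Fin 7) : ℕ) = 5 := rfl
@[simp] lemma val_six : ((6 : Fin 7) : ℕ) = 6 := rfl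

/-- The inclusion of `Fin 5` in `Fin 7`. -/
def F (k : Fin 5) : Fin 7 := ⟨k.1, by omega⟩

lemma F_inj : Function.Injective F := by
  intro a b hab; simpa [F, Fin.ext_iff] using hab

lemma F0 : F 0 = (0 : Fin 7) := rfl
lemma F1 : F 1 = (1 : Fin 7) := rfl

lemma fin7_cases (i : Fin 7) : (∃ k : Fin 5, i = F k) ∨ i = 5 ∨ i = 6 := by
  rcases lt_or_ge (i : ℕ) 5 with h | h
  · exact Or.inl ⟨⟨i, h⟩, Fin.ext rfl⟩
  · have := i.2
    right
    rcases Nat.lt_or_ge (i : ℕ) 6 with h' | h'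
    · exact Or.inl (Fin.ext (by omega))
    · exact Or.inr (Fin.ext (by omega))

lemma F_ne_five (k : Fin 5) : F k ≠ 5 := by
  intro hh
  have := congrArg Fin.val hh
  simp [F] at this
  omega

lemma F_ne_six (k : Fin 5) : F k ≠ 6 := by
  intro hh
  have := congrArg Fin.val hh
  simp [F] at this
  omega

/-- Extend `x : Fin 5 → Fin 6` by two extra values `p q` at positions `5, 6`. -/
def ext5 (x : Fin 5 → Fin 6) (p q : Fin 6) : Fin 7 → Fin 6 :=
  fun k => if h : (k : ℕ) < 5 then x ⟨k, h⟩ else if (k : ℕ) = 5 then p else q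

@[simp] lemma ext5_F (x : Fin 5 → Fin 6) (p q : Fin 6) (k : Fin 5) :
    ext5 x p q (F k) = x k := by simp [ext5, F]

@[simp] lemma ext5_five (x : Fin 5 → Fin 6) (p q : Fin 6) : ext5 x p q 5 = p := by simp [ext5]

@[simp] lemma ext5_six (x : Fin 5 → Fin 6) (p q : Fin 6) : ext5 x p q 6 = q := by simp [ext5]

lemma ext5_fst_indep (x : Fin 5 → Fin 6) (p p' q : Fin 6) {k : Fin 7} (h : k ≠ 5) :
    ext5 x p q k = ext5 x p' q k := by
  have : (k : ℕ) ≠ 5 := fun hh => h (Fin.ext hh)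
  simp only [ext5, this, if_false]

lemma ext5_snd_indep (x : Fin 5 → Fin 6) (p q q' : Fin 6) {k : Fin 7} (h : k ≠ 6) :
    ext5 x p q k = ext5 x p q' k := by
  have h6 : (k : ℕ) ≠ 6 := fun hh => h (Fin.ext hh)
  have : (k : ℕ) < 5 ∨ (k : ℕ) = 5 := by omega
  rcases this with h' | h' <;> simp [ext5, h']

/-- `Fin 5` as the subtype of `Fin 7` of elements with value `< 5`. -/
def emb : Fin 5 ≃ {i : Fin 7 // (i : ℕ) < 5} where
  toFun k := ⟨F k, k.2⟩
  invFun i := ⟨(i : Fin 7), i.2⟩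
  left_inv _ := rfl
  right_inv _ := rfl

/-- Extension of permutations of `Fin 5` to `Fin 7`, fixing `5` and `6`. -/
def iota : Perm (Fin 5) →* Perm (Fin 7) := Equiv.Perm.extendDomainHom emb

@[simp] lemma iota_F (π : Perm (Fin 5)) (k : Fin 5) : iota π (F k) = F (π k) :=
  Equiv.Perm.extendDomain_apply_image π emb k

@[simp] lemma iota_five (π : Perm (Fin 5)) : iota π 5 = 5 :=
  Equiv.Perm.extendDomain_apply_not_subtype π emb (by decide)

@[simp] lemma iota_six (π : Perm (Fin 5)) : iota π 6 = 6 :=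
  Equiv.Perm.extendDomain_apply_not_subtype π emb (by decide)

lemma sign_iota (π : Perm (Fin 5)) : Equiv.Perm.sign (iota π) = Equiv.Perm.sign π :=
  Equiv.Perm.sign_extendDomain π emb

/-- The fixed permutation of `Fin 7` exchanging `0 ↔ 5` and `1 ↔ 6`. -/
def cp : Perm (Fin 7) := Equiv.swap 0 5 * Equiv.swap 1 6

@[simp] lemma cp_F0 : cp (F 0) = (5 : Fin 7) := by decide
@[simp] lemma cp_F1 : cp (F 1) = (6 : Fin 7) := by decide
@[simp] lemma cp_5 : cp 5 = F 0 := by decide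
@[simp] lemma cp_6 : cp 6 = F 1 := by decide

lemma cp_F {m : Fin 5} (h0 : m ≠ 0) (h1 : m ≠ 1) : cp (F m) = F m := by
  fin_cases m <;> first | (exact absurd rfl h0) | (exact absurd rfl h1) | decide

lemma sign_cp : Equiv.Perm.sign cp = 1 := by decide

/-- The basic 6-to-1 parametrization of the "good" permutations of `Fin 7`. -/
def psi (σ τ : Perm (Fin 5)) : Perm (Fin 7) := iota σ * cp * (iota τ)⁻¹

lemma sign_psi (σ τ : Perm (Fin 5)) :
    Equiv.Perm.sign (psi σ τ) = Equiv.Perm.sign σ * Equiv.Perm.sign τ := by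
  simp [psi, sign_iota, sign_cp]

/-- real-valued sign of a permutation -/
def sgn {n : ℕ} (ρ : Perm (Fin n)) : ℝ := ((Equiv.Perm.sign ρ : ℤ) : ℝ)

/-- The basic contraction of `W` against a permutation pattern of Kronecker deltas. -/
def TT (W : Fin 6 → Fin 6 → Fin 6 → Fin 6 → ℝ) (x y : Fin 5 → Fin 6) (ρ : Perm (Fin 7)) : ℝ :=
  ∑ p, ∑ q, ∑ r, ∑ s, W r s p q * ∏ i : Fin 7, kd (ext5 x p q (ρ i)) (ext5 y r s i)

lemma exists_iota (g : Perm (Fin 7)) (h5 : g 5 = 5) (h6 : g 6 = 6) :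
    ∃ σ : Perm (Fin 5), iota σ = g := by
  have hinv5 : g⁻¹ 5 = 5 := by
    have := congrArg (g⁻¹ ·) h5
    simpa using this.symm
  have hinv6 : g⁻¹ 6 = 6 := by
    have := congrArg (g⁻¹ ·) h6
    simpa using this.symm
  have key : ∀ (g' : Perm (Fin 7)), g' 5 = 5 → g' 6 = 6 → ∀ k : Fin 5, ((g' (F k)) : ℕ) < 5 := by
    intro g' h5' h6' k
    have hne5 : g' (F k) ≠ 5 := by
      intro hh
      exact F_ne_five k (g'.injective (by rw [hh, h5']))
    have hne6 : g' (F k) ≠ 6 := by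
      intro hh
      exact F_ne_six k (g'.injective (by rw [hh, h6']))
    have h7 := (g' (F k)).2
    have v5 : ((g' (F k)) : ℕ) ≠ 5 := fun hv => hne5 (Fin.ext hv)
    have v6 : ((g' (F k)) : ℕ) ≠ 6 := fun hv => hne6 (Fin.ext hv)
    omega
  refine ⟨⟨fun k => ⟨(g (F k) : ℕ), key g h5 h6 k⟩,
           fun k => ⟨(g⁻¹ (F k) : ℕ), key g⁻¹ hinv5 hinv6 k⟩, ?_, ?_⟩, ?_⟩
  · intro k
    apply Fin.ext
    have : F (⟨(g (F k) : ℕ), key g h5 h6 k⟩ : Fin 5) = g (F k) := Fin.ext rfl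
    simp only [this]
    have : g⁻¹ (g (F k)) = F k := by simp
    simp [this, F]
  · intro k
    apply Fin.ext
    have : F (⟨(g⁻¹ (F k) : ℕ), key g⁻¹ hinv5 hinv6 k⟩ : Fin 5) = g⁻¹ (F k) := Fin.ext rfl
    simp only [this]
    have : g (g⁻¹ (F k)) = F k := by simp
    simp [this, F]
  · apply Equiv.ext
    intro i
    rcases fin7_cases i with ⟨k, rfl⟩ | rfl | rfl
    · rw [iota_F]
      exact Fin.ext rfl
    · rw [iota_five, h5]
    · rw [iota_six, h6]

lemma det_kd_zero (u l : Fin 7 → Fin 6) :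
    (Matrix.of fun k m => kd (u k) (l m)).det = 0 := by
  obtain ⟨k, k', hne, hkk⟩ := Fintype.exists_ne_map_eq_of_card_lt u (by simp)
  refine Matrix.det_zero_of_row_eq hne ?_
  funext m
  simp [Matrix.of_apply, hkk]

lemma swap5 (G : Perm (Fin 7) → Fin 6 → Fin 6 → Fin 6 → Fin 6 → ℝ) :
    ∑ ρ : Perm (Fin 7), ∑ p, ∑ q, ∑ r, ∑ s, G ρ p q r s
      = ∑ p, ∑ q, ∑ r, ∑ s, ∑ ρ : Perm (Fin 7), G ρ p q r s := by
  rw [Finset.sum_comm]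
  refine Finset.sum_congr rfl fun p _ => ?_
  rw [Finset.sum_comm]
  refine Finset.sum_congr rfl fun q _ => ?_
  rw [Finset.sum_comm]
  refine Finset.sum_congr rfl fun r _ => ?_
  exact Finset.sum_comm

lemma L1 (W : Fin 6 → Fin 6 → Fin 6 → Fin 6 → ℝ) (x y : Fin 5 → Fin 6) :
    ∑ ρ : Perm (Fin 7), sgn ρ * TT W x y ρ = 0 := by
  have h : ∀ ρ : Perm (Fin 7), sgn ρ * TT W x y ρ
      = ∑ p, ∑ q, ∑ r, ∑ s, sgn ρ *
        (W r s p q * ∏ i : Fin 7, kd (ext5 x p q (ρ i)) (ext5 y r s i)) := by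
    intro ρ
    simp [TT, Finset.mul_sum]
  simp only [h]
  rw [swap5]
  have h2 : ∀ p q r s : Fin 6,
      (∑ ρ : Perm (Fin 7), sgn ρ *
        (W r s p q * ∏ i : Fin 7, kd (ext5 x p q (ρ i)) (ext5 y r s i))) = 0 := by
    intro p q r s
    have hdet := det_kd_zero (ext5 x p q) (ext5 y r s)
    rw [Matrix.det_apply'] at hdet
    calc ∑ ρ : Perm (Fin 7), sgn ρ *
          (W r s p q * ∏ i : Fin 7, kd (ext5 x p q (ρ i)) (ext5 y r s i))
        = W r s p q * ∑ ρ : Perm (Fin 7), ((Equiv.Perm.sign ρ : ℤ) : ℝ) *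
            ∏ i : Fin 7, (Matrix.of fun k m => kd (ext5 x p q k) (ext5 y r s m)) (ρ i) i := by
          rw [Finset.mul_sum]
          refine Finset.sum_congr rfl fun ρ _ => ?_
          simp [sgn, Matrix.of_apply]
          ring
      _ = 0 := by rw [hdet, mul_zero]
  simp [h2]

variable {W : Fin 6 → Fin 6 → Fin 6 → Fin 6 → ℝ} {x y : Fin 5 → Fin 6}

lemma caseA (ht1 : ∀ s q, ∑ p, W p s p q = 0) (ρ : Perm (Fin 7)) (hρ : ρ 5 = 5) :
    TT W x y ρ = 0 := by
  have hne : ∀ i : Fin 7, i ≠ 5 → ρ i ≠ 5 := by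
    intro i hi hcon
    exact hi (ρ.injective (hcon.trans hρ.symm))
  have hcol : ∀ p q : Fin 6,
      (∑ r, ∑ s, W r s p q * ∏ i : Fin 7, kd (ext5 x p q (ρ i)) (ext5 y r s i))
        = ∑ s, W p s p q * ∏ i : Fin 7, kd (ext5 x p q (ρ i)) (ext5 y p s i) := by
    intro p q
    refine Finset.sum_eq_single p ?_ (fun hh => absurd (Finset.mem_univ p) hh)
    intro r _ hrp
    refine Finset.sum_eq_zero fun s _ => ?_
    have hz : kd (ext5 x p q (ρ 5)) (ext5 y r s 5) = 0 := by
      rw [hρ, ext5_five, ext5_five]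
      exact kd_eq_zero fun hh => hrp hh.symm
    rw [mul_eq_zero]
    exact Or.inr (Finset.prod_eq_zero (Finset.mem_univ 5) hz)
  have hprod : ∀ p q s : Fin 6,
      (∏ i : Fin 7, kd (ext5 x p q (ρ i)) (ext5 y p s i))
        = ∏ i ∈ Finset.univ.erase 5, kd (ext5 x q q (ρ i)) (ext5 y q s i) := by
    intro p q s
    rw [← Finset.mul_prod_erase Finset.univ _ (Finset.mem_univ (5 : Fin 7))]
    rw [hρ, ext5_five, ext5_five, kd_self, one_mul]
    refine Finset.prod_congr rfl fun i hi => ?_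
    have hi5 : i ≠ 5 := Finset.ne_of_mem_erase hi
    rw [ext5_fst_indep x p q q (hne i hi5), ext5_fst_indep y p q s hi5]
  simp only [TT, hcol, hprod]
  rw [Finset.sum_comm]
  rw [Finset.sum_eq_zero]
  intro q _
  rw [Finset.sum_comm]
  refine Finset.sum_eq_zero fun s _ => ?_
  rw [← Finset.sum_mul, ht1, zero_mul]

lemma caseB (ht2 : ∀ s p, ∑ q, W q s p q = 0) (ρ : Perm (Fin 7)) (hρ : ρ 5 = 6) :
    TT W x y ρ = 0 := by
  have hne : ∀ i : Fin 7, i ≠ 5 → ρ i ≠ 6 := fun i hi hcon =>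
    hi (ρ.injective (hcon.trans hρ.symm))
  have hcol : ∀ p q : Fin 6,
      (∑ r, ∑ s, W r s p q * ∏ i : Fin 7, kd (ext5 x p q (ρ i)) (ext5 y r s i))
        = ∑ s, W q s p q * ∏ i : Fin 7, kd (ext5 x p q (ρ i)) (ext5 y q s i) := by
    intro p q
    refine Finset.sum_eq_single q ?_ (fun hh => absurd (Finset.mem_univ q) hh)
    intro r _ hrq
    refine Finset.sum_eq_zero fun s _ => ?_
    have hz : kd (ext5 x p q (ρ 5)) (ext5 y r s 5) = 0 := by
      rw [hρ, ext5_six, ext5_five]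
      exact kd_eq_zero fun hh => hrq hh.symm
    rw [mul_eq_zero]
    exact Or.inr (Finset.prod_eq_zero (Finset.mem_univ 5) hz)
  have hprod : ∀ p q s : Fin 6,
      (∏ i : Fin 7, kd (ext5 x p q (ρ i)) (ext5 y q s i))
        = ∏ i ∈ Finset.univ.erase 5, kd (ext5 x p p (ρ i)) (ext5 y p s i) := by
    intro p q s
    rw [← Finset.mul_prod_erase Finset.univ _ (Finset.mem_univ (5 : Fin 7))]
    rw [hρ, ext5_six, ext5_five, kd_self, one_mul]
    refine Finset.prod_congr rfl fun i hi => ?_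
    have hi5 : i ≠ 5 := Finset.ne_of_mem_erase hi
    rw [ext5_snd_indep x p q p (hne i hi5), ext5_fst_indep y q p s hi5]
  simp only [TT, hcol, hprod]
  rw [Finset.sum_eq_zero]
  intro p _
  rw [Finset.sum_comm]
  refine Finset.sum_eq_zero fun s _ => ?_
  rw [← Finset.sum_mul, ht2, zero_mul]

lemma caseC (ht3 : ∀ r q, ∑ p, W r p p q = 0) (ρ : Perm (Fin 7)) (hρ : ρ 6 = 5) :
    TT W x y ρ = 0 := by
  have hne : ∀ i : Fin 7, i ≠ 6 → ρ i ≠ 5 := fun i hi hcon =>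
    hi (ρ.injective (hcon.trans hρ.symm))
  have hcol : ∀ p q r : Fin 6,
      (∑ s, W r s p q * ∏ i : Fin 7, kd (ext5 x p q (ρ i)) (ext5 y r s i))
        = W r p p q * ∏ i : Fin 7, kd (ext5 x p q (ρ i)) (ext5 y r p i) := by
    intro p q r
    refine Finset.sum_eq_single p ?_ (fun hh => absurd (Finset.mem_univ p) hh)
    intro s _ hsp
    have hz : kd (ext5 x p q (ρ 6)) (ext5 y r s 6) = 0 := by
      rw [hρ, ext5_five, ext5_six]
      exact kd_eq_zero fun hh => hsp hh.symm
    rw [mul_eq_zero]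
    exact Or.inr (Finset.prod_eq_zero (Finset.mem_univ 6) hz)
  have hprod : ∀ p q r : Fin 6,
      (∏ i : Fin 7, kd (ext5 x p q (ρ i)) (ext5 y r p i))
        = ∏ i ∈ Finset.univ.erase 6, kd (ext5 x q q (ρ i)) (ext5 y r q i) := by
    intro p q r
    rw [← Finset.mul_prod_erase Finset.univ _ (Finset.mem_univ (6 : Fin 7))]
    rw [hρ, ext5_five, ext5_six, kd_self, one_mul]
    refine Finset.prod_congr rfl fun i hi => ?_
    have hi6 : i ≠ 6 := Finset.ne_of_mem_erase hi
    rw [ext5_fst_indep x p q q (hne i hi6), ext5_snd_indep y r p q hi6]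
  simp only [TT, hcol, hprod]
  rw [Finset.sum_comm]
  rw [Finset.sum_eq_zero]
  intro q _
  rw [Finset.sum_comm]
  refine Finset.sum_eq_zero fun r _ => ?_
  rw [← Finset.sum_mul, ht3, zero_mul]

lemma caseD (ht4 : ∀ r p, ∑ q, W r q p q = 0) (ρ : Perm (Fin 7)) (hρ : ρ 6 = 6) :
    TT W x y ρ = 0 := by
  have hne : ∀ i : Fin 7, i ≠ 6 → ρ i ≠ 6 := fun i hi hcon =>
    hi (ρ.injective (hcon.trans hρ.symm))
  have hcol : ∀ p q r : Fin 6,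
      (∑ s, W r s p q * ∏ i : Fin 7, kd (ext5 x p q (ρ i)) (ext5 y r s i))
        = W r q p q * ∏ i : Fin 7, kd (ext5 x p q (ρ i)) (ext5 y r q i) := by
    intro p q r
    refine Finset.sum_eq_single q ?_ (fun hh => absurd (Finset.mem_univ q) hh)
    intro s _ hsq
    have hz : kd (ext5 x p q (ρ 6)) (ext5 y r s 6) = 0 := by
      rw [hρ, ext5_six, ext5_six]
      exact kd_eq_zero fun hh => hsq hh.symm
    rw [mul_eq_zero]
    exact Or.inr (Finset.prod_eq_zero (Finset.mem_univ 6) hz)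
  have hprod : ∀ p q r : Fin 6,
      (∏ i : Fin 7, kd (ext5 x p q (ρ i)) (ext5 y r q i))
        = ∏ i ∈ Finset.univ.erase 6, kd (ext5 x p p (ρ i)) (ext5 y r p i) := by
    intro p q r
    rw [← Finset.mul_prod_erase Finset.univ _ (Finset.mem_univ (6 : Fin 7))]
    rw [hρ, ext5_six, ext5_six, kd_self, one_mul]
    refine Finset.prod_congr rfl fun i hi => ?_
    have hi6 : i ≠ 6 := Finset.ne_of_mem_erase hi
    rw [ext5_snd_indep x p q p (hne i hi6), ext5_snd_indep y r q p hi6]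
  simp only [TT, hcol, hprod]
  rw [Finset.sum_eq_zero]
  intro p _
  rw [Finset.sum_comm]
  refine Finset.sum_eq_zero fun r _ => ?_
  rw [← Finset.sum_mul, ht4, zero_mul]


lemma TT_psi (W : Fin 6 → Fin 6 → Fin 6 → Fin 6 → ℝ) (x y : Fin 5 → Fin 6)
    (σ τ : Perm (Fin 5)) :
    TT W x y (psi σ τ)
      = W (x (σ 0)) (x (σ 1)) (y (τ 0)) (y (τ 1)) *
        (kd (x (σ 2)) (y (τ 2)) * kd (x (σ 3)) (y (τ 3)) * kd (x (σ 4)) (y (τ 4))) := by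
  have happ : ∀ i : Fin 7, psi σ τ (iota τ i) = iota σ (cp i) := by
    intro i
    simp [psi, Equiv.Perm.mul_apply]
  have hprod : ∀ p q r s : Fin 6,
      (∏ i : Fin 7, kd (ext5 x p q (psi σ τ i)) (ext5 y r s i))
        = kd p (y (τ 0)) * kd q (y (τ 1)) * kd (x (σ 2)) (y (τ 2)) *
          kd (x (σ 3)) (y (τ 3)) * kd (x (σ 4)) (y (τ 4)) *
          kd (x (σ 0)) r * kd (x (σ 1)) s := by
    intro p q r s
    rw [← Equiv.prod_comp (iota τ : Equiv.Perm (Fin 7))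
      (fun i => kd (ext5 x p q (psi σ τ i)) (ext5 y r s i))]
    rw [Fin.prod_univ_seven]
    simp only [happ]
    rw [show (0 : Fin 7) = F 0 from rfl, show (1 : Fin 7) = F 1 from rfl,
        show (2 : Fin 7) = F 2 from rfl, show (3 : Fin 7) = F 3 from rfl,
        show (4 : Fin 7) = F 4 from rfl]
    rw [show cp (F 0) = (5 : Fin 7) from by decide, show cp (F 1) = (6 : Fin 7) from by decide,
        show cp (F 2) = F 2 from by decide, show cp (F 3) = F 3 from by decide,
        show cp (F 4) = F 4 from by decide, show cp 5 = F 0 from by decide,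
        show cp 6 = F 1 from by decide]
    simp only [iota_F, iota_five, iota_six, ext5_F, ext5_five, ext5_six]
  simp only [TT, hprod]
  rw [Finset.sum_eq_single (y (τ 0))]
  rotate_left
  · intro p _ hp
    refine Finset.sum_eq_zero fun q _ => Finset.sum_eq_zero fun r _ => Finset.sum_eq_zero fun s _ => ?_
    rw [kd_eq_zero hp]; ring
  · intro hh
    exact absurd (Finset.mem_univ _) hh
  rw [Finset.sum_eq_single (y (τ 1))]
  rotate_left
  · intro q _ hq
    refine Finset.sum_eq_zero fun r _ => Finset.sum_eq_zero fun s _ => ?_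
    rw [kd_eq_zero hq]; ring
  · intro hh
    exact absurd (Finset.mem_univ _) hh
  rw [Finset.sum_eq_single (x (σ 0))]
  rotate_left
  · intro r _ hr
    refine Finset.sum_eq_zero fun s _ => ?_
    rw [kd_eq_zero (Ne.symm hr)]; ring
  · intro hh
    exact absurd (Finset.mem_univ _) hh
  rw [Finset.sum_eq_single (x (σ 1))]
  rotate_left
  · intro s _ hs
    rw [kd_eq_zero (Ne.symm hs)]; ring
  · intro hh
    exact absurd (Finset.mem_univ _) hh
  simp only [kd_self, mul_one, one_mul]
  try ring

lemma iota_comm_cp {π : Perm (Fin 5)} (h0 : π 0 = 0) (h1 : π 1 = 1) :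
    iota π * cp = cp * iota π := by
  apply Equiv.ext
  intro i
  rw [Equiv.Perm.mul_apply, Equiv.Perm.mul_apply]
  rcases fin7_cases i with ⟨k, rfl⟩ | rfl | rfl
  · by_cases hk0 : k = 0
    · subst hk0
      rw [cp_F0, iota_five, iota_F, h0, cp_F0]
    · by_cases hk1 : k = 1
      · subst hk1
        rw [cp_F1, iota_six, iota_F, h1, cp_F1]
      · have hπ0 : π k ≠ 0 := fun hc => hk0 (π.injective (hc.trans h0.symm))
        have hπ1 : π k ≠ 1 := fun hc => hk1 (π.injective (hc.trans h1.symm))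
        rw [cp_F hk0 hk1, iota_F]
        exact (cp_F hπ0 hπ1).symm
  · rw [cp_5, iota_F, h0, iota_five, cp_5]
  · rw [cp_6, iota_F, h1, iota_six, cp_6]

lemma psi_right_mul (σ τ π : Perm (Fin 5)) (h0 : π 0 = 0) (h1 : π 1 = 1) :
    psi (σ * π) (τ * π) = psi σ τ := by
  have h1' : iota π * cp * (iota π)⁻¹ = cp := by
    rw [iota_comm_cp h0 h1]; group
  unfold psi
  rw [map_mul, map_mul]
  calc iota σ * iota π * cp * (iota τ * iota π)⁻¹
      = iota σ * (iota π * cp * (iota π)⁻¹) * (iota τ)⁻¹ := by group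
    _ = iota σ * cp * (iota τ)⁻¹ := by rw [h1']

lemma psi_eq_imp {σ τ σ' τ' : Perm (Fin 5)} (heq : psi σ τ = psi σ' τ') :
    ∃ π : Perm (Fin 5), π 0 = 0 ∧ π 1 = 1 ∧ σ = σ' * π ∧ τ = τ' * π := by
  set α := σ'⁻¹ * σ with hα
  set β := τ'⁻¹ * τ with hβ
  have key : iota α * cp = cp * iota β := by
    have e1 : iota α * cp = (iota σ')⁻¹ * (iota σ * cp * (iota τ)⁻¹) * iota τ := by
      rw [hα, map_mul, map_inv]; group
    rw [e1, show (iota σ * cp * (iota τ)⁻¹ : Perm (Fin 7)) = psi σ τ from rfl, heq,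
        show (psi σ' τ' : Perm (Fin 7)) = iota σ' * cp * (iota τ')⁻¹ from rfl,
        hβ, map_mul, map_inv]
    group
  have keyapp : ∀ i, iota α (cp i) = cp (iota β i) := by
    intro i
    rw [← Equiv.Perm.mul_apply, ← Equiv.Perm.mul_apply, key]
  have hα0 : α 0 = 0 := by
    have := keyapp 5
    rw [cp_5, iota_F, iota_five, cp_5] at this
    exact F_inj this
  have hα1 : α 1 = 1 := by
    have := keyapp 6
    rw [cp_6, iota_F, iota_six, cp_6] at this
    exact F_inj this
  have hβ0 : β 0 = 0 := by
    have := keyapp (F 0)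
    rw [cp_F0, iota_five, iota_F] at this
    have : cp (F (β 0)) = cp (F 0) := by rw [← this, cp_F0]
    exact F_inj (cp.injective this)
  have hβ1 : β 1 = 1 := by
    have := keyapp (F 1)
    rw [cp_F1, iota_six, iota_F] at this
    have : cp (F (β 1)) = cp (F 1) := by rw [← this, cp_F1]
    exact F_inj (cp.injective this)
  have hk : ∀ k : Fin 5, k ≠ 0 → k ≠ 1 → α k = β k := by
    intro k hk0 hk1
    have := keyapp (F k)
    rw [cp_F hk0 hk1, iota_F, iota_F] at this
    have hb0 : β k ≠ 0 := fun hc => hk0 (β.injective (hc.trans hβ0.symm))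
    have hb1 : β k ≠ 1 := fun hc => hk1 (β.injective (hc.trans hβ1.symm))
    rw [cp_F hb0 hb1] at this
    exact F_inj this
  have hαβ : α = β := by
    apply Equiv.ext
    intro k
    by_cases hk0 : k = 0
    · subst hk0; rw [hα0, hβ0]
    · by_cases hk1 : k = 1
      · subst hk1; rw [hα1, hβ1]
      · exact hk k hk0 hk1
  refine ⟨α, hα0, hα1, by rw [hα]; group, by rw [hαβ, hβ]; group⟩

lemma psi_surj (ρ : Perm (Fin 7)) (h5 : ((ρ 5 : Fin 7) : ℕ) < 5) (h6 : ((ρ 6 : Fin 7) : ℕ) < 5) :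
    ∃ σ τ : Perm (Fin 5), psi σ τ = ρ := by
  have hv5 : ((ρ⁻¹ 5 : Fin 7) : ℕ) < 5 := by
    have hne5 : ρ⁻¹ 5 ≠ 5 := by
      intro hc
      have : ρ 5 = 5 := by conv_lhs => rw [← hc, Equiv.Perm.inv_def, Equiv.apply_symm_apply]
      rw [this] at h5; exact absurd h5 (by decide)
    have hne6 : ρ⁻¹ 5 ≠ 6 := by
      intro hc
      have : ρ 6 = 5 := by rw [← hc, Equiv.Perm.inv_def, Equiv.apply_symm_apply]
      rw [this] at h6; exact absurd h6 (by decide)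
    have h7 := (ρ⁻¹ 5).2
    have v5 : ((ρ⁻¹ 5 : Fin 7) : ℕ) ≠ 5 := fun hv => hne5 (Fin.ext hv)
    have v6 : ((ρ⁻¹ 5 : Fin 7) : ℕ) ≠ 6 := fun hv => hne6 (Fin.ext hv)
    omega
  have hv6 : ((ρ⁻¹ 6 : Fin 7) : ℕ) < 5 := by
    have hne5 : ρ⁻¹ 6 ≠ 5 := by
      intro hc
      have : ρ 5 = 6 := by rw [← hc, Equiv.Perm.inv_def, Equiv.apply_symm_apply]
      rw [this] at h5; exact absurd h5 (by decide)
    have hne6 : ρ⁻¹ 6 ≠ 6 := by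
      intro hc
      have : ρ 6 = 6 := by conv_lhs => rw [← hc, Equiv.Perm.inv_def, Equiv.apply_symm_apply]
      rw [this] at h6; exact absurd h6 (by decide)
    have h7 := (ρ⁻¹ 6).2
    have v5 : ((ρ⁻¹ 6 : Fin 7) : ℕ) ≠ 5 := fun hv => hne5 (Fin.ext hv)
    have v6 : ((ρ⁻¹ 6 : Fin 7) : ℕ) ≠ 6 := fun hv => hne6 (Fin.ext hv)
    omega
  set v0 : Fin 5 := ⟨(ρ⁻¹ 5 : Fin 7), hv5⟩ with hv0
  set v1 : Fin 5 := ⟨(ρ⁻¹ 6 : Fin 7), hv6⟩ with hv1d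
  have hFv0 : F v0 = ρ⁻¹ 5 := Fin.ext rfl
  have hFv1 : F v1 = ρ⁻¹ 6 := Fin.ext rfl
  have hv01 : v0 ≠ v1 := by
    intro hc
    have : ρ⁻¹ 5 = ρ⁻¹ 6 := by rw [← hFv0, ← hFv1, hc]
    exact absurd (ρ⁻¹.injective this) (by decide)
  -- build τ with τ 0 = v0, τ 1 = v1
  set s1 : Perm (Fin 5) := Equiv.swap 0 v0 with hs1
  set w : Fin 5 := s1 v1 with hw
  have hwne0 : w ≠ 0 := by
    intro hc
    have : s1 w = s1 0 := by rw [hc]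
    rw [hw, Equiv.swap_apply_self] at this
    rw [hs1] at this
    simp at this
    exact hv01 this.symm
  set s2 : Perm (Fin 5) := Equiv.swap 1 w with hs2
  set τ : Perm (Fin 5) := s1 * s2 with hτ
  have hτ0 : τ 0 = v0 := by
    rw [hτ, Equiv.Perm.mul_apply, hs2, Equiv.swap_apply_of_ne_of_ne (by decide) (Ne.symm hwne0),
        hs1, Equiv.swap_apply_left]
  have hτ1 : τ 1 = v1 := by
    rw [hτ, Equiv.Perm.mul_apply, hs2, Equiv.swap_apply_left, hw, Equiv.swap_apply_self]
  -- build σ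
  set g : Perm (Fin 7) := ρ * iota τ * cp⁻¹ with hg
  have hg5 : g 5 = 5 := by
    rw [hg, Equiv.Perm.mul_apply, Equiv.Perm.mul_apply,
        show cp⁻¹ (5 : Fin 7) = F 0 from by decide, iota_F, hτ0, hFv0,
        Equiv.Perm.inv_def, Equiv.apply_symm_apply]
  have hg6 : g 6 = 6 := by
    rw [hg, Equiv.Perm.mul_apply, Equiv.Perm.mul_apply,
        show cp⁻¹ (6 : Fin 7) = F 1 from by decide, iota_F, hτ1, hFv1,
        Equiv.Perm.inv_def, Equiv.apply_symm_apply]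
  obtain ⟨σ, hσ⟩ := exists_iota g hg5 hg6
  refine ⟨σ, τ, ?_⟩
  rw [psi, hσ, hg]
  group

set_option maxRecDepth 8000 in
/-- The main abstract identity: for any `W` that is "trace-free" in all four ways,
the 5+5 antisymmetrized delta-contraction identity holds in dimension 6. -/
lemma main (W : Fin 6 → Fin 6 → Fin 6 → Fin 6 → ℝ)
    (ht1 : ∀ s q, ∑ p, W p s p q = 0) (ht2 : ∀ s p, ∑ q, W q s p q = 0)
    (ht3 : ∀ r q, ∑ p, W r p p q = 0) (ht4 : ∀ r p, ∑ q, W r q p q = 0)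
    (x y : Fin 5 → Fin 6) :
    ∑ σ : Equiv.Perm (Fin 5), ∑ τ : Equiv.Perm (Fin 5),
      ((Equiv.Perm.sign σ : ℤ) : ℝ) * ((Equiv.Perm.sign τ : ℤ) : ℝ) *
        W (x (σ 0)) (x (σ 1)) (y (τ 0)) (y (τ 1)) *
        (if x (σ 2) = y (τ 2) then (1 : ℝ) else 0) *
        (if x (σ 3) = y (τ 3) then (1 : ℝ) else 0) *
        (if x (σ 4) = y (τ 4) then (1 : ℝ) else 0) = 0 := by
  classical
  set f : Perm (Fin 7) → ℝ := fun ρ => sgn ρ * TT W x y ρ with hf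
  have hterm : ∀ σ τ : Perm (Fin 5),
      ((Equiv.Perm.sign σ : ℤ) : ℝ) * ((Equiv.Perm.sign τ : ℤ) : ℝ) *
        W (x (σ 0)) (x (σ 1)) (y (τ 0)) (y (τ 1)) *
        (if x (σ 2) = y (τ 2) then (1 : ℝ) else 0) *
        (if x (σ 3) = y (τ 3) then (1 : ℝ) else 0) *
        (if x (σ 4) = y (τ 4) then (1 : ℝ) else 0) = f (psi σ τ) := by
    intro σ τ
    rw [hf]
    dsimp only
    rw [TT_psi]
    have hs : sgn (psi σ τ)
        = ((Equiv.Perm.sign σ : ℤ) : ℝ) * ((Equiv.Perm.sign τ : ℤ) : ℝ) := by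
      rw [sgn, sign_psi]
      push_cast
      ring
    rw [hs]
    simp only [kd]
    ring
  have hLHS : (∑ σ : Equiv.Perm (Fin 5), ∑ τ : Equiv.Perm (Fin 5),
      ((Equiv.Perm.sign σ : ℤ) : ℝ) * ((Equiv.Perm.sign τ : ℤ) : ℝ) *
        W (x (σ 0)) (x (σ 1)) (y (τ 0)) (y (τ 1)) *
        (if x (σ 2) = y (τ 2) then (1 : ℝ) else 0) *
        (if x (σ 3) = y (τ 3) then (1 : ℝ) else 0) *
        (if x (σ 4) = y (τ 4) then (1 : ℝ) else 0))
      = ∑ z : Equiv.Perm (Fin 5) × Equiv.Perm (Fin 5), f (psi z.1 z.2) := by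
    rw [Fintype.sum_prod_type]
    exact Finset.sum_congr rfl fun σ _ => Finset.sum_congr rfl fun τ _ => hterm σ τ
  rw [hLHS]
  rw [Finset.sum_comp (fun ρ => f ρ) (fun z : Equiv.Perm (Fin 5) × Equiv.Perm (Fin 5) => psi z.1 z.2)]
  have hfib : ∀ ρ ∈ (univ : Finset (Equiv.Perm (Fin 5) × Equiv.Perm (Fin 5))).image
      (fun z => psi z.1 z.2),
      ({z ∈ (univ : Finset (Equiv.Perm (Fin 5) × Equiv.Perm (Fin 5))) | psi z.1 z.2 = ρ}).card
        = 6 := by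
    intro ρ hρ
    obtain ⟨z0, _, rfl⟩ := Finset.mem_image.1 hρ
    have hset : {z ∈ (univ : Finset (Equiv.Perm (Fin 5) × Equiv.Perm (Fin 5))) |
          psi z.1 z.2 = psi z0.1 z0.2}
        = Finset.image (fun π => (z0.1 * π, z0.2 * π))
            {π ∈ (univ : Finset (Equiv.Perm (Fin 5))) | π 0 = 0 ∧ π 1 = 1} := by
      ext z
      simp only [Finset.mem_filter, Finset.mem_univ, true_and, Finset.mem_image]
      constructor
      · intro hz
        obtain ⟨π, h0, h1, hσ, hτ⟩ := psi_eq_imp hz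
        refine ⟨π, ⟨h0, h1⟩, ?_⟩
        rw [← hσ, ← hτ]
      · rintro ⟨π, ⟨h0, h1⟩, rfl⟩
        exact psi_right_mul z0.1 z0.2 π h0 h1
    rw [hset, Finset.card_image_of_injective _
      (fun π π' hππ => mul_left_cancel (congrArg Prod.fst hππ))]
    decide
  have hzero : ∀ ρ : Perm (Fin 7),
      ρ ∉ (univ : Finset (Equiv.Perm (Fin 5) × Equiv.Perm (Fin 5))).image
        (fun z => psi z.1 z.2) → f ρ = 0 := by
    intro ρ hρ
    by_cases h5 : ((ρ 5 : Fin 7) : ℕ) < 5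
    · by_cases h6 : ((ρ 6 : Fin 7) : ℕ) < 5
      · obtain ⟨σ, τ, hστ⟩ := psi_surj ρ h5 h6
        exact absurd (Finset.mem_image.2 ⟨(σ, τ), Finset.mem_univ _, hστ⟩) hρ
      · have h7 := (ρ 6).2
        rcases Nat.lt_or_ge ((ρ 6 : Fin 7) : ℕ) 6 with h' | h'
        · have : ρ 6 = 5 := Fin.ext (by omega)
          rw [hf]; dsimp only; rw [caseC ht3 ρ this, mul_zero]
        · have : ρ 6 = 6 := Fin.ext (by omega)
          rw [hf]; dsimp only; rw [caseD ht4 ρ this, mul_zero]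
    · have h7 := (ρ 5).2
      rcases Nat.lt_or_ge ((ρ 5 : Fin 7) : ℕ) 6 with h' | h'
      · have : ρ 5 = 5 := Fin.ext (by omega)
        rw [hf]; dsimp only; rw [caseA ht1 ρ this, mul_zero]
      · have : ρ 5 = 6 := Fin.ext (by omega)
        rw [hf]; dsimp only; rw [caseB ht2 ρ this, mul_zero]
  calc ∑ ρ ∈ (univ : Finset (Equiv.Perm (Fin 5) × Equiv.Perm (Fin 5))).image
        (fun z => psi z.1 z.2),
        ({z ∈ (univ : Finset (Equiv.Perm (Fin 5) × Equiv.Perm (Fin 5))) |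
          psi z.1 z.2 = ρ}).card • f ρ
      = ∑ ρ ∈ (univ : Finset (Equiv.Perm (Fin 5) × Equiv.Perm (Fin 5))).image
          (fun z => psi z.1 z.2), (6 : ℝ) * f ρ := by
        refine Finset.sum_congr rfl fun ρ hρ => ?_
        rw [hfib ρ hρ]
        rw [nsmul_eq_mul]
        norm_num
    _ = 6 * ∑ ρ ∈ (univ : Finset (Equiv.Perm (Fin 5) × Equiv.Perm (Fin 5))).image
          (fun z => psi z.1 z.2), f ρ := by rw [Finset.mul_sum]
    _ = 6 * ∑ ρ : Perm (Fin 7), f ρ := by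
        rw [Finset.sum_subset (Finset.subset_univ _) (fun ρ _ hρ => hzero ρ hρ)]
    _ = 0 := by rw [L1 W x y, mul_zero]

end Dim6Aux

set_option maxRecDepth 8000 in
/-- The six-dimensional dimensionally dependent identity `C^{[ab}{}_{[cd} δ^{efg]}_{hij]} = 0`. -/
theorem dim6_identity (ε : Fin 6 → ℝ) (W : Fin 6 → Fin 6 → Fin 6 → Fin 6 → ℝ)
    (hW : IsWeylCandidate ε W) (a b e f g c d h i j : Fin 6) :
    ∑ σ : Equiv.Perm (Fin 5), ∑ τ : Equiv.Perm (Fin 5),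
      ((Equiv.Perm.sign σ : ℤ) : ℝ) * ((Equiv.Perm.sign τ : ℤ) : ℝ) *
        W (![a, b, e, f, g] (σ 0)) (![a, b, e, f, g] (σ 1))
          (![c, d, h, i, j] (τ 0)) (![c, d, h, i, j] (τ 1)) *
        (if ![a, b, e, f, g] (σ 2) = ![c, d, h, i, j] (τ 2) then (1 : ℝ) else 0) *
        (if ![a, b, e, f, g] (σ 3) = ![c, d, h, i, j] (τ 3) then (1 : ℝ) else 0) *
        (if ![a, b, e, f, g] (σ 4) = ![c, d, h, i, j] (τ 4) then (1 : ℝ) else 0) = 0 := by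
  obtain ⟨hε, ha1, ha2, htr, hsym, hb⟩ := hW
  have ht4 : ∀ r p, ∑ q, W r q p q = 0 := htr
  have ht3 : ∀ r q, ∑ p, W r p p q = 0 := by
    intro r q
    have hcg : ∀ p : Fin 6, W r p p q = -(W r p q p) := fun p => ha2 r p p q
    rw [Finset.sum_congr rfl fun p _ => hcg p, Finset.sum_neg_distrib, htr, neg_zero]
  have ht1 : ∀ s q, ∑ p, W p s p q = 0 := by
    intro s q
    have hcg : ∀ p : Fin 6, W p s p q = W s p q p := by
      intro p
      rw [ha1 p s p q, ha2 s p p q]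
      ring
    rw [Finset.sum_congr rfl fun p _ => hcg p, htr]
  have ht2 : ∀ s p, ∑ q, W q s p q = 0 := by
    intro s p
    have hcg : ∀ q : Fin 6, W q s p q = -(W s q p q) := fun q => ha1 q s p q
    rw [Finset.sum_congr rfl fun q _ => hcg q, Finset.sum_neg_distrib, htr, neg_zero]
  exact Dim6Aux.main W ht1 ht2 ht3 ht4 ![a, b, e, f, g] ![c, d, h, i, j]
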